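/- Let (A,B) be a coisotropic pair in a symplectic vector space (V,ω) and (Â,B̂) a coisotropic pair in a symplectic vector space (V̂,ω̂). Then there exists a linear symplectomorphism S : V → V̂ with S(A) = Â and S(B) = B̂ if and only if the canonical invariants of (A,B) and (Â,B̂) are equal, i.e. dim(A^ω ∩ B^ω) = dim(Â^ω̂ ∩ B̂^ω̂), dim A^ω = dim Â^ω̂, dim B^ω = dim B̂^ω̂, dim V = dim V̂, and dim(A^ω ∩ B) = dim(Â^ω̂ ∩ B̂). -/

import Mathlib

open Submodule Module

def oOrtho {V : Type*} [AddCommGroup V] [Module ℝ V]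
    (ω : V →ₗ[ℝ] V →ₗ[ℝ] ℝ) (W : Submodule ℝ V) : Submodule ℝ V where
  carrier := {v | ∀ u ∈ W, ω v u = 0}
  add_mem' := by
    intro a b ha hb u hu
    rw [Set.mem_setOf_eq] at *
    rw [map_add, LinearMap.add_apply, ha u hu, hb u hu, add_zero]
  zero_mem' := by intro u _; simp
  smul_mem' := by
    intro c a ha u hu
    rw [Set.mem_setOf_eq] at *
    rw [map_smul, LinearMap.smul_apply, ha u hu, smul_zero]

section Aux

variable {V : Type*} [AddCommGroup V] [Module ℝ V]
variable {W : Type*} [AddCommGroup W] [Module ℝ W]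

lemma mem_oOrtho_iff {ω : V →ₗ[ℝ] V →ₗ[ℝ] ℝ} {N : Submodule ℝ V} {v : V} :
    v ∈ oOrtho ω N ↔ ∀ u ∈ N, ω v u = 0 := Iff.rfl

lemma alt_swap_zero {ω : V →ₗ[ℝ] V →ₗ[ℝ] ℝ} (h : ω.IsAlt) {x y : V}
    (hxy : ω x y = 0) : ω y x = 0 := by
  have := h.neg x y
  rw [hxy] at this
  rw [← this, neg_zero]

lemma oOrtho_eq_orthogonal {ω : V →ₗ[ℝ] V →ₗ[ℝ] ℝ} (h : ω.IsAlt) (N : Submodule ℝ V) :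
    oOrtho ω N = LinearMap.BilinForm.orthogonal ω N := by
  ext v
  constructor
  · intro hv u hu
    exact alt_swap_zero h (hv u hu)
  · intro hv u hu
    exact alt_swap_zero h (hv u hu)

lemma finrank_oOrtho [FiniteDimensional ℝ V] {ω : V →ₗ[ℝ] V →ₗ[ℝ] ℝ}
    (halt : ω.IsAlt) (hnd : LinearMap.BilinForm.Nondegenerate ω) (N : Submodule ℝ V) :
    finrank ℝ (oOrtho ω N) = finrank ℝ V - finrank ℝ N := by
  rw [oOrtho_eq_orthogonal halt]
  exact LinearMap.BilinForm.finrank_orthogonal hnd N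

lemma oOrtho_oOrtho [FiniteDimensional ℝ V] {ω : V →ₗ[ℝ] V →ₗ[ℝ] ℝ}
    (halt : ω.IsAlt) (hnd : LinearMap.BilinForm.Nondegenerate ω) (N : Submodule ℝ V) :
    oOrtho ω (oOrtho ω N) = N := by
  rw [oOrtho_eq_orthogonal halt, oOrtho_eq_orthogonal halt]
  exact LinearMap.BilinForm.orthogonal_orthogonal hnd halt.isRefl N

/-- A symplectomorphism maps `oOrtho` to `oOrtho`. -/
lemma map_oOrtho {ω : V →ₗ[ℝ] V →ₗ[ℝ] ℝ} {ω' : W →ₗ[ℝ] W →ₗ[ℝ] ℝ}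
    (S : V ≃ₗ[ℝ] W) (hS : ∀ v u : V, ω' (S v) (S u) = ω v u) (N : Submodule ℝ V) :
    Submodule.map (S : V →ₗ[ℝ] W) (oOrtho ω N) = oOrtho ω' (Submodule.map (S : V →ₗ[ℝ] W) N) := by
  ext w
  simp only [Submodule.mem_map]
  constructor
  · rintro ⟨v, hv, rfl⟩
    intro u hu
    rcases Submodule.mem_map.1 hu with ⟨u0, hu0, rfl⟩
    simp only [LinearEquiv.coe_coe]
    rw [hS]
    exact hv u0 hu0
  · intro hw
    refine ⟨S.symm w, ?_, by simp⟩
    intro u hu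
    have := hw (S u) (by exact Submodule.mem_map_of_mem hu)
    rw [← hS (S.symm w) u]
    simpa using this

/-- Realize a functional on a subspace via the form. -/
lemma exists_realize [FiniteDimensional ℝ V] {ω : V →ₗ[ℝ] V →ₗ[ℝ] ℝ}
    (hnd : LinearMap.BilinForm.Nondegenerate ω) (U : Submodule ℝ V) (f : Module.Dual ℝ ↥U) :
    ∃ v : V, ∀ u : ↥U, ω v ↑u = f u := by
  obtain ⟨g, hg⟩ := LinearMap.dualMap_surjective_of_injective U.injective_subtype f
  refine ⟨(LinearMap.BilinForm.toDual ω hnd).symm g, fun u => ?_⟩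
  rw [LinearMap.BilinForm.apply_toDual_symm_apply (hB := hnd)]
  rw [← hg]; rfl

/-- A complement inside a subspace. -/
lemma exists_compl_within {G K : Submodule ℝ V} (h : G ≤ K) :
    ∃ M : Submodule ℝ V, M ≤ K ∧ G ⊓ M = ⊥ ∧ G ⊔ M = K := by
  obtain ⟨M', hM'⟩ := Submodule.exists_isCompl (Submodule.comap K.subtype G)
  refine ⟨Submodule.map K.subtype M', Submodule.map_subtype_le K M', ?_, ?_⟩
  · have hG : G = Submodule.map K.subtype (Submodule.comap K.subtype G) := by
      rw [Submodule.map_comap_subtype, inf_eq_right.2 h]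
    rw [hG, ← Submodule.map_inf _ K.injective_subtype, hM'.inf_eq_bot, Submodule.map_bot]
  · have hG : G = Submodule.map K.subtype (Submodule.comap K.subtype G) := by
      rw [Submodule.map_comap_subtype, inf_eq_right.2 h]
    rw [hG, ← Submodule.map_sup, hM'.sup_eq_top, Submodule.map_top, Submodule.range_subtype]

lemma span_range_coe_basis {P : Submodule ℝ V} {ι : Type*} (bs : Basis ι ℝ ↥P) :
    span ℝ (Set.range (fun i => (bs i : V))) = P := by
  have : Set.range (fun i => (bs i : V)) = P.subtype '' (Set.range bs) := by
    rw [← Set.range_comp]; rfl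
  rw [this, ← Submodule.map_span, Basis.span_eq, Submodule.map_top, Submodule.range_subtype]

lemma li_coe_basis {P : Submodule ℝ V} {ι : Type*} (bs : Basis ι ℝ ↥P) :
    LinearIndependent ℝ (fun i => (bs i : V)) :=
  bs.linearIndependent.map' P.subtype (Submodule.ker_subtype P)

end Aux
section Witt

variable {V : Type*} [AddCommGroup V] [Module ℝ V] [FiniteDimensional ℝ V]
variable {W : Type*} [AddCommGroup W] [Module ℝ W] [FiniteDimensional ℝ W]

/-- Witt-type extension theorem for symplectic vector spaces. -/
lemma witt_extension
    (ω : V →ₗ[ℝ] V →ₗ[ℝ] ℝ) (hωalt : ω.IsAlt) (hωnd : LinearMap.BilinForm.Nondegenerate ω)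
    (ω' : W →ₗ[ℝ] W →ₗ[ℝ] ℝ) (hω'alt : ω'.IsAlt) (hω'nd : LinearMap.BilinForm.Nondegenerate ω')
    (hdim : finrank ℝ V = finrank ℝ W) :
    ∀ (k : ℕ) (U : Submodule ℝ V) (φ : ↥U →ₗ[ℝ] W),
      finrank ℝ V = finrank ℝ ↥U + k → Function.Injective φ →
      (∀ x y : ↥U, ω' (φ x) (φ y) = ω ↑x ↑y) →
      ∃ S : V ≃ₗ[ℝ] W, (∀ v u : V, ω' (S v) (S u) = ω v u) ∧ ∀ x : ↥U, S ↑x = φ x := by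
  intro k
  induction k with
  | zero =>
    intro U φ hk hinj hiso
    have hU : U = ⊤ := Submodule.eq_top_of_finrank_eq (by omega)
    subst hU
    set ψ : V →ₗ[ℝ] W := φ.comp (Submodule.topEquiv (R := ℝ) (M := V)).symm.toLinearMap with hψ
    have hψinj : Function.Injective ψ :=
      hinj.comp (Submodule.topEquiv (R := ℝ) (M := V)).symm.injective
    have hbij : Function.Bijective ψ := by
      refine ⟨hψinj, ?_⟩
      have : finrank ℝ V = finrank ℝ W := hdim
      exact (LinearMap.injective_iff_surjective_of_finrank_eq_finrank this).1 hψinj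
    refine ⟨LinearEquiv.ofBijective ψ hbij, ?_, ?_⟩
    · intro v u
      have : ∀ v : V, ψ v = φ ⟨v, trivial⟩ := fun v => rfl
      rw [LinearEquiv.ofBijective_apply, LinearEquiv.ofBijective_apply, this, this, hiso]
    · intro x
      rw [LinearEquiv.ofBijective_apply]
      show φ ⟨↑x, trivial⟩ = φ x
      congr 1
  | succ k ih =>
    intro U φ hk hinj hiso
    -- find v ∉ U, w ∉ range φ with the compatibility property
    have hUlt : finrank ℝ ↥U < finrank ℝ V := by omega
    have hrange : finrank ℝ ↥(LinearMap.range φ) = finrank ℝ ↥U :=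
      LinearMap.finrank_range_of_inj hinj
    obtain ⟨v, w, hvU, hwr, hstar⟩ :
        ∃ (v : V) (w : W), v ∉ U ∧ w ∉ LinearMap.range φ ∧
          ∀ u : ↥U, ω' w (φ u) = ω v ↑u := by
      by_cases hrad : U ⊓ oOrtho ω U = ⊥
      · -- radical is zero: take v in oOrtho U, w in oOrtho (range φ)
        have h1 : oOrtho ω U ≠ ⊥ := by
          intro h
          have := finrank_oOrtho hωalt hωnd U
          rw [h, finrank_bot] at this
          omega
        obtain ⟨v, hv, hv0⟩ := Submodule.exists_mem_ne_zero_of_ne_bot h1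
        have h2 : oOrtho ω' (LinearMap.range φ) ≠ ⊥ := by
          intro h
          have := finrank_oOrtho hω'alt hω'nd (LinearMap.range φ)
          rw [h, finrank_bot, hrange] at this
          omega
        obtain ⟨w, hw, hw0⟩ := Submodule.exists_mem_ne_zero_of_ne_bot h2
        refine ⟨v, w, ?_, ?_, ?_⟩
        · intro hvU
          apply hv0
          have : v ∈ U ⊓ oOrtho ω U := ⟨hvU, hv⟩
          rw [hrad] at this
          simpa using this
        · intro hwU
          rcases hwU with ⟨u0, rfl⟩
          have : (↑u0 : V) ∈ U ⊓ oOrtho ω U := by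
            refine ⟨u0.2, ?_⟩
            intro x hx
            have := hw (φ ⟨x, hx⟩) ⟨⟨x, hx⟩, rfl⟩
            rw [hiso] at this
            simpa using this
          rw [hrad] at this
          apply hw0
          have hu0 : u0 = 0 := Subtype.ext (by simpa using this)
          rw [hu0, map_zero]
        · intro u
          rw [hw (φ u) ⟨u, rfl⟩, hv ↑u u.2]
      · -- nonzero radical
        obtain ⟨r, hr, hr0⟩ := Submodule.exists_mem_ne_zero_of_ne_bot hrad
        have hrU : r ∈ U := hr.1
        have hrO : r ∈ oOrtho ω U := hr.2
        -- a functional f₀ on U with f₀ r = 1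
        obtain ⟨f1, hf1⟩ : ∃ f : Module.Dual ℝ ↥U, f ⟨r, hrU⟩ ≠ 0 := by
          by_contra h
          push_neg at h
          have : (⟨r, hrU⟩ : ↥U) = 0 := (Module.forall_dual_apply_eq_zero_iff ℝ _).1 h
          exact hr0 (by simpa using congrArg Subtype.val this)
        set f₀ : Module.Dual ℝ ↥U := (f1 ⟨r, hrU⟩)⁻¹ • f1 with hf₀
        have hf₀r : f₀ ⟨r, hrU⟩ = 1 := by
          simp [hf₀, inv_mul_cancel₀ hf1]
        obtain ⟨v, hv⟩ := exists_realize hωnd U f₀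
        set e : ↥U ≃ₗ[ℝ] ↥(LinearMap.range φ) := LinearEquiv.ofInjective φ hinj with he
        set g : Module.Dual ℝ ↥(LinearMap.range φ) := f₀.comp e.symm.toLinearMap with hg
        obtain ⟨w, hw⟩ := exists_realize hω'nd (LinearMap.range φ) g
        have hgφ : ∀ u : ↥U, g ⟨φ u, ⟨u, rfl⟩⟩ = f₀ u := by
          intro u
          have : e.symm ⟨φ u, ⟨u, rfl⟩⟩ = u := by
            apply e.injective
            simp only [LinearEquiv.apply_symm_apply]
            apply Subtype.ext
            show φ u = ↑(e u)
            rw [he]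
            exact (LinearEquiv.ofInjective_apply φ (h := hinj) u).symm
          simp [hg, this]
        refine ⟨v, w, ?_, ?_, ?_⟩
        · intro hvU
          have h1 : ω v r = f₀ ⟨r, hrU⟩ := hv ⟨r, hrU⟩
          rw [hf₀r] at h1
          have h2 : ω r v = 0 := hrO v hvU
          rw [alt_swap_zero hωalt h2] at h1
          exact one_ne_zero h1.symm
        · intro hwr
          rcases hwr with ⟨u0, rfl⟩
          have h1 : ω' (φ u0) (φ ⟨r, hrU⟩) = ω ↑u0 r := hiso _ _
          have h2 : ω ↑u0 r = 0 := alt_swap_zero hωalt (hrO ↑u0 u0.2)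
          have h3 : ω' (φ u0) (φ ⟨r, hrU⟩) = g ⟨φ ⟨r, hrU⟩, ⟨_, rfl⟩⟩ :=
            hw ⟨φ ⟨r, hrU⟩, ⟨_, rfl⟩⟩
          rw [hgφ, hf₀r] at h3
          rw [h1, h2] at h3
          exact one_ne_zero h3.symm
        · intro u
          have h1 : ω' w (φ u) = g ⟨φ u, ⟨u, rfl⟩⟩ := hw ⟨φ u, ⟨u, rfl⟩⟩
          rw [hgφ] at h1
          rw [h1, hv u]
    -- now extend φ to U ⊔ span v
    have hv0 : v ≠ 0 := fun h => hvU (h ▸ U.zero_mem)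
    set f : V →ₗ.[ℝ] W := ⟨U, φ⟩ with hf
    have hvf : v ∉ f.domain := hvU
    set f' := f.supSpanSingleton v w hvf with hf'
    set U' : Submodule ℝ V := U ⊔ (ℝ ∙ v) with hU'
    have hdom : f'.domain = U' := by
      rw [hf', LinearPMap.domain_supSpanSingleton]
    have happ : ∀ (u : V) (hu : u ∈ U) (c : ℝ) (h : u + c • v ∈ f'.domain),
        f'.toFun ⟨u + c • v, h⟩ = φ ⟨u, hu⟩ + c • w := by
      intro u hu c h
      exact f.supSpanSingleton_apply_mk v w hvf u hu c
    set φ' : ↥U' →ₗ[ℝ] W := f'.toFun.comp (LinearEquiv.ofEq U' f'.domain hdom.symm).toLinearMap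
      with hφ'
    have hdecomp : ∀ x : ↥U', ∃ (u : V) (hu : u ∈ U) (c : ℝ),
        (x : V) = u + c • v ∧ φ' x = φ ⟨u, hu⟩ + c • w := by
      intro x
      obtain ⟨u, hu, z, hz, hx⟩ := Submodule.mem_sup.1 x.2
      obtain ⟨c, rfl⟩ := Submodule.mem_span_singleton.1 hz
      refine ⟨u, hu, c, hx.symm, ?_⟩
      have hmem : u + c • v ∈ f'.domain := by rw [hdom, hx]; exact x.2
      have : φ' x = f'.toFun ⟨u + c • v, hmem⟩ := by
        apply congrArg
        apply Subtype.ext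
        simpa using hx.symm
      rw [this, happ u hu c hmem]
    have hmemU' : ∀ u ∈ U, u ∈ U' := fun u hu => Submodule.mem_sup_left hu
    have hφ'U : ∀ (u : V) (hu : u ∈ U), φ' ⟨u, hmemU' u hu⟩ = φ ⟨u, hu⟩ := by
      intro u hu
      have hmem : u + (0 : ℝ) • v ∈ f'.domain := by
        rw [hdom]; exact hmemU' _ (by simpa using hu)
      have : φ' ⟨u, hmemU' u hu⟩ = f'.toFun ⟨u + (0 : ℝ) • v, hmem⟩ := by
        apply congrArg
        apply Subtype.ext
        simp
      rw [this, happ u hu 0 hmem]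
      simp
    -- dimension count
    have hvspan : finrank ℝ ↥(ℝ ∙ v) = 1 := finrank_span_singleton hv0
    have hinf : U ⊓ (ℝ ∙ v) = ⊥ := by
      rw [eq_bot_iff]
      rintro x ⟨hx1, hx2⟩
      obtain ⟨c, rfl⟩ := Submodule.mem_span_singleton.1 hx2
      rcases eq_or_ne c 0 with rfl | hc
      · simp
      · exact absurd (by simpa [smul_smul, inv_mul_cancel₀ hc] using U.smul_mem c⁻¹ hx1) hvU
    have hdimU' : finrank ℝ ↥U' = finrank ℝ ↥U + 1 := by
      have h9 := Submodule.finrank_sup_add_finrank_inf_eq U (ℝ ∙ v)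
      rw [hinf, finrank_bot, hvspan] at h9
      rw [hU']
      omega
    -- injectivity of φ'
    have hinj' : Function.Injective φ' := by
      rw [injective_iff_map_eq_zero]
      intro x hx
      obtain ⟨u, hu, c, hxv, hφx⟩ := hdecomp x
      rw [hφx] at hx
      rcases eq_or_ne c 0 with rfl | hc
      · simp only [zero_smul, add_zero] at hx
        have : (⟨u, hu⟩ : ↥U) = 0 := hinj (by simpa using hx)
        have hu0 : u = 0 := by simpa using congrArg Subtype.val this
        apply Subtype.ext
        rw [hxv, hu0]
        simp
      · exfalso
        apply hwr
        refine ⟨(-c⁻¹) • ⟨u, hu⟩, ?_⟩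
        have h1 : φ ⟨u, hu⟩ = -(c • w) := eq_neg_of_add_eq_zero_left hx
        rw [map_smul, h1, smul_neg, neg_smul, neg_neg, smul_smul, inv_mul_cancel₀ hc, one_smul]
    -- isometry of φ'
    have hiso' : ∀ x y : ↥U', ω' (φ' x) (φ' y) = ω ↑x ↑y := by
      intro x y
      obtain ⟨u, hu, c, hxv, hφx⟩ := hdecomp x
      obtain ⟨u2, hu2, c2, hyv, hφy⟩ := hdecomp y
      rw [hφx, hφy, hxv, hyv]
      have hww : ω' w w = 0 := hω'alt w
      have hvv : ω v v = 0 := hωalt v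
      have h1 : ω' (φ ⟨u, hu⟩) (φ ⟨u2, hu2⟩) = ω u u2 := hiso _ _
      have h2 : ω' w (φ ⟨u2, hu2⟩) = ω v u2 := hstar ⟨u2, hu2⟩
      have h3 : ω' (φ ⟨u, hu⟩) w = ω u v := by
        have h4 : ω' w (φ ⟨u, hu⟩) = ω v u := hstar ⟨u, hu⟩
        have h5 := hω'alt.neg w (φ ⟨u, hu⟩)
        have h6 := hωalt.neg v u
        rw [h4] at h5
        rw [← h5, ← h6]
      simp only [map_add, map_smul, LinearMap.add_apply, LinearMap.smul_apply, smul_eq_mul]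
      rw [h1, h2, h3, hww, hvv]
    -- apply the induction hypothesis
    have hk' : finrank ℝ V = finrank ℝ ↥U' + k := by rw [hdimU']; omega
    obtain ⟨S, hS1, hS2⟩ := ih U' φ' hk' hinj' hiso'
    refine ⟨S, hS1, ?_⟩
    intro x
    have : S ↑x = φ' ⟨↑x, hmemU' ↑x x.2⟩ := hS2 ⟨↑x, hmemU' ↑x x.2⟩
    rw [this, hφ'U ↑x x.2]

end Witt
section Adapted

/-- Standard Gram matrix determined by the invariants. -/
def gram (k1 a b r : ℕ) :
    (Fin k1 ⊕ (Fin a ⊕ (Fin b ⊕ (Fin r ⊕ Fin r)))) →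
    (Fin k1 ⊕ (Fin a ⊕ (Fin b ⊕ (Fin r ⊕ Fin r)))) → ℝ
  | .inr (.inr (.inr (.inl i))), .inr (.inr (.inr (.inr j))) => if (i : ℕ) = (j : ℕ) then 1 else 0
  | .inr (.inr (.inr (.inr i))), .inr (.inr (.inr (.inl j))) => if (i : ℕ) = (j : ℕ) then -1 else 0
  | _, _ => 0

variable {V : Type*} [AddCommGroup V] [Module ℝ V] [FiniteDimensional ℝ V]

lemma adapted (ω : V →ₗ[ℝ] V →ₗ[ℝ] ℝ) (halt : ω.IsAlt)
    (hnd : LinearMap.BilinForm.Nondegenerate ω)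
    (A B : Submodule ℝ V) (hA : oOrtho ω A ≤ A) (hB : oOrtho ω B ≤ B) :
    ∃ (a b r : ℕ) (eg : Fin (finrank ℝ ↥(oOrtho ω A ⊓ oOrtho ω B)) → V)
      (em : Fin a → V) (en : Fin b → V) (ep : Fin r → V) (eqq : Fin r → V),
      a + finrank ℝ ↥(oOrtho ω A ⊓ oOrtho ω B) = finrank ℝ ↥(oOrtho ω A ⊓ B) ∧
      r + finrank ℝ ↥(oOrtho ω A ⊓ B) = finrank ℝ ↥(oOrtho ω A) ∧
      b + finrank ℝ ↥(oOrtho ω A ⊓ oOrtho ω B) + r = finrank ℝ ↥(oOrtho ω B) ∧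
      LinearIndependent ℝ (Sum.elim eg (Sum.elim em (Sum.elim en (Sum.elim ep eqq)))) ∧
      Submodule.span ℝ (Set.range eg ∪ Set.range em ∪ Set.range ep) = oOrtho ω A ∧
      Submodule.span ℝ (Set.range eg ∪ Set.range en ∪ Set.range eqq) = oOrtho ω B ∧
      ∀ i j, ω (Sum.elim eg (Sum.elim em (Sum.elim en (Sum.elim ep eqq))) i)
               (Sum.elim eg (Sum.elim em (Sum.elim en (Sum.elim ep eqq))) j) =
             gram (finrank ℝ ↥(oOrtho ω A ⊓ oOrtho ω B)) a b r i j := by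
  classical
  set C := oOrtho ω A with hC
  set D := oOrtho ω B with hD
  have hCA : C ≤ A := hA
  have hDB : D ≤ B := hB
  have hAC : oOrtho ω C = A := oOrtho_oOrtho halt hnd A
  have hBD : oOrtho ω D = B := oOrtho_oOrtho halt hnd B
  have hCiso : ∀ x ∈ C, ∀ y ∈ C, ω x y = 0 := fun x hx y hy => hx y (hA hy)
  have hDiso : ∀ x ∈ D, ∀ y ∈ D, ω x y = 0 := fun x hx y hy => hx y (hB hy)
  set G := C ⊓ D with hG
  set K := C ⊓ B with hK
  set L := D ⊓ A with hL
  have hGK : G ≤ K := inf_le_inf_left C hDB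
  have hGL : G ≤ L := le_inf inf_le_right (le_trans inf_le_left hCA)
  have hKC : K ≤ C := inf_le_left
  have hLD : L ≤ D := inf_le_left
  have hKB : K ≤ oOrtho ω D := by rw [hBD]; exact inf_le_right
  have hLA : L ≤ oOrtho ω C := by rw [hAC]; exact inf_le_right
  obtain ⟨M, hMK, hGM, hGMK⟩ := exists_compl_within hGK
  obtain ⟨P, hPC, hKP, hKPC⟩ := exists_compl_within hKC
  set r := finrank ℝ ↥P with hr
  set pb : Basis (Fin r) ℝ ↥P := Module.finBasis ℝ ↥P with hpb
  have hsep : ∀ p : ↥P, (∀ d : ↥D, ω ↑p ↑d = 0) → p = 0 := by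
    intro p hp
    have h1 : (↑p : V) ∈ oOrtho ω D := by
      intro u hu
      exact hp ⟨u, hu⟩
    rw [hBD] at h1
    have h2 : (↑p : V) ∈ K ⊓ P := ⟨⟨hPC p.2, h1⟩, p.2⟩
    rw [hKP] at h2
    exact Subtype.ext (by simpa using h2)
  set χ : ↥P →ₗ[ℝ] Module.Dual ℝ ↥D := ω.compl₁₂ P.subtype D.subtype with hχ
  have hχinj : Function.Injective χ := by
    rw [injective_iff_map_eq_zero]
    intro p hp
    exact hsep p (fun d => by
      have := congrFun (congrArg DFunLike.coe hp) d
      simpa [hχ] using this)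
  set ψ : ↥D →ₗ[ℝ] Module.Dual ℝ ↥P :=
    χ.dualMap.comp (Module.evalEquiv ℝ ↥D).toLinearMap with hψdef
  have hψ : ∀ (d : ↥D) (p : ↥P), ψ d p = ω ↑p ↑d := by
    intro d p
    simp [hψdef, hχ, Module.evalEquiv_toLinearMap]
  have hψsurj : Function.Surjective ψ := by
    have h1 : Function.Surjective χ.dualMap := LinearMap.dualMap_surjective_of_injective hχinj
    intro f
    obtain ⟨g, hg⟩ := h1 f
    refine ⟨(Module.evalEquiv ℝ ↥D).symm g, ?_⟩
    rw [hψdef]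
    simp only [LinearMap.coe_comp, LinearEquiv.coe_coe, Function.comp_apply,
      LinearEquiv.apply_symm_apply]
    exact hg
  choose qD hqD using fun i => hψsurj (pb.coord i)
  set eqq : Fin r → V := fun i => ↑(qD i) with heqq
  have hqmem : ∀ i, eqq i ∈ D := fun i => (qD i).2
  have hpq : ∀ i j, ω ↑(pb j) (eqq i) = if i = j then 1 else 0 := by
    intro i j
    have h1 : ψ (qD i) (pb j) = ω ↑(pb j) ↑(qD i) := hψ (qD i) (pb j)
    rw [hqD i] at h1
    rw [← h1, Basis.coord_apply, Basis.repr_self]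
    simp [Finsupp.single_apply, eq_comm]
  set Q := Submodule.span ℝ (Set.range eqq) with hQ
  have hQD : Q ≤ D := Submodule.span_le.2 (by
    rintro x ⟨i, rfl⟩
    exact hqmem i)
  have hcomb : ∀ (c : Fin r → ℝ) (j : Fin r), ω ↑(pb j) (∑ i, c i • eqq i) = c j := by
    intro c j
    rw [map_sum]
    rw [Finset.sum_eq_single j]
    · rw [map_smul, smul_eq_mul, hpq j j]
      simp
    · intro i _ hij
      rw [map_smul, smul_eq_mul, hpq i j]
      simp [hij]
    · intro h
      exact absurd (Finset.mem_univ j) h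
  have hqind : LinearIndependent ℝ eqq := by
    rw [Fintype.linearIndependent_iff]
    intro c hc j
    have := hcomb c j
    rw [hc, map_zero] at this
    exact this.symm
  have hLQ : L ⊓ Q = ⊥ := by
    rw [eq_bot_iff]
    rintro x ⟨hxL, hxQ⟩
    obtain ⟨c, rfl⟩ := (mem_span_range_iff_exists_fun ℝ).1 hxQ
    have hz : ∀ j, c j = 0 := by
      intro j
      have h1 := hcomb c j
      have h2 : ω (∑ i, c i • eqq i) ↑(pb j) = 0 :=
        hLA hxL ↑(pb j) (hPC (pb j).2)
      rw [alt_swap_zero halt h2] at h1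
      exact h1.symm
    have hzz : ∑ i, c i • eqq i = 0 := by
      simp [hz]
    rw [hzz]
    exact Submodule.zero_mem ⊥
  have hLQD : L ⊔ Q = D := by
    apply le_antisymm
    · exact sup_le hLD hQD
    · intro d hd
      set c : Fin r → ℝ := fun j => ω ↑(pb j) d with hc
      set d' := d - ∑ j, c j • eqq j with hd'
      have hd'D : d' ∈ D := by
        apply Submodule.sub_mem _ hd
        apply Submodule.sum_mem
        intro j _
        exact Submodule.smul_mem _ _ (hQD (Submodule.subset_span ⟨j, rfl⟩))
      have hd'P : ∀ j : Fin r, ω d' ↑(pb j) = 0 := by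
        intro j
        rw [hd', map_sub, LinearMap.sub_apply]
        have h1 : ω (∑ i, c i • eqq i) ↑(pb j) = -(c j) := by
          have h2 := hcomb c j
          have h3 := halt.neg ↑(pb j) (∑ i, c i • eqq i)
          rw [h2] at h3
          rw [← h3]
        rw [h1, hc]
        have h4 := halt.neg ↑(pb j) d
        rw [← h4]
        ring
      have hd'A : d' ∈ oOrtho ω C := by
        intro y hy
        rw [← hKPC] at hy
        obtain ⟨yK, hyK, yP, hyP, rfl⟩ := Submodule.mem_sup.1 hy
        rw [map_add]
        have h5 : ω d' yK = 0 :=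
          alt_swap_zero halt (hKB hyK d' hd'D)
        have h6 : ω d' yP = 0 := by
          have hrepr : (⟨yP, hyP⟩ : ↥P) = ∑ j, pb.repr ⟨yP, hyP⟩ j • pb j :=
            (Basis.sum_repr pb ⟨yP, hyP⟩).symm
          have hyPv : yP = ∑ j, pb.repr ⟨yP, hyP⟩ j • ((pb j : V)) := by
            have h7 := congrArg (Submodule.subtype P) hrepr
            simp only [map_sum, map_smul] at h7
            exact h7
          rw [hyPv, map_sum]
          apply Finset.sum_eq_zero
          intro j _
          rw [map_smul, smul_eq_mul, hd'P j, mul_zero]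
        rw [h5, h6, add_zero]
      have hd'L : d' ∈ L := ⟨hd'D, by rw [← hAC]; exact hd'A⟩
      have hdd : d = d' + ∑ j, c j • eqq j := by rw [hd']; abel
      rw [hdd]
      apply Submodule.add_mem
      · exact Submodule.mem_sup_left hd'L
      · apply Submodule.mem_sup_right
        apply Submodule.sum_mem
        intro j _
        exact Submodule.smul_mem _ _ (Submodule.subset_span ⟨j, rfl⟩)
  have hQr : finrank ℝ ↥Q = r := by
    rw [hQ, finrank_span_eq_card hqind]
    simp
  obtain ⟨N, hNL, hGN, hGNL⟩ := exists_compl_within hGL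
  set gb : Basis (Fin (finrank ℝ ↥G)) ℝ ↥G := Module.finBasis ℝ ↥G with hgb
  set mb : Basis (Fin (finrank ℝ ↥M)) ℝ ↥M := Module.finBasis ℝ ↥M with hmb
  set nb : Basis (Fin (finrank ℝ ↥N)) ℝ ↥N := Module.finBasis ℝ ↥N with hnb
  set eg : Fin (finrank ℝ ↥G) → V := fun i => ↑(gb i) with heg
  set em : Fin (finrank ℝ ↥M) → V := fun i => ↑(mb i) with hem
  set en : Fin (finrank ℝ ↥N) → V := fun i => ↑(nb i) with hen
  set ep : Fin r → V := fun i => ↑(pb i) with hep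
  refine ⟨finrank ℝ ↥M, finrank ℝ ↥N, r, eg, em, en, ep, eqq, ?_, ?_, ?_, ?_, ?_, ?_, ?_⟩
  · -- a + k1 = k5
    have h1 := Submodule.finrank_sup_add_finrank_inf_eq G M
    rw [hGMK, hGM, finrank_bot] at h1
    omega
  · -- r + k5 = k2
    have h1 := Submodule.finrank_sup_add_finrank_inf_eq K P
    rw [hKPC, hKP, finrank_bot] at h1
    omega
  · -- b + k1 + r = k3
    have h1 := Submodule.finrank_sup_add_finrank_inf_eq G N
    rw [hGNL, hGN, finrank_bot] at h1
    have h2 := Submodule.finrank_sup_add_finrank_inf_eq L Q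
    rw [hLQD, hLQ, finrank_bot, hQr] at h2
    omega
  · -- linear independence
    have hspanp : Submodule.span ℝ (Set.range ep) = P := span_range_coe_basis pb
    have hspanq : Submodule.span ℝ (Set.range eqq) = Q := hQ.symm
    have hspann : Submodule.span ℝ (Set.range en) = N := span_range_coe_basis nb
    have hspanm : Submodule.span ℝ (Set.range em) = M := span_range_coe_basis mb
    have hspanpq : Submodule.span ℝ (Set.range (Sum.elim ep eqq)) = P ⊔ Q := by
      rw [Set.Sum.elim_range, Submodule.span_union, hspanp, hspanq]
    have hspannpq :
        Submodule.span ℝ (Set.range (Sum.elim en (Sum.elim ep eqq))) = N ⊔ (P ⊔ Q) := by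
      rw [Set.Sum.elim_range, Submodule.span_union, hspann, hspanpq]
    have hspanmnpq :
        Submodule.span ℝ (Set.range (Sum.elim em (Sum.elim en (Sum.elim ep eqq)))) =
          M ⊔ (N ⊔ (P ⊔ Q)) := by
      rw [Set.Sum.elim_range, Submodule.span_union, hspanm, hspannpq]
    have hPQ : P ⊓ Q = ⊥ := by
      rw [eq_bot_iff]
      rintro x ⟨hxP, hxQ⟩
      have hxG : x ∈ G := ⟨hPC hxP, hQD hxQ⟩
      have h9 : x ∈ K ⊓ P := ⟨hGK hxG, hxP⟩
      rw [hKP] at h9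
      exact h9
    have hNPQ : N ⊓ (P ⊔ Q) = ⊥ := by
      rw [eq_bot_iff]
      rintro x ⟨hxN, hxPQ⟩
      obtain ⟨xP, hxP, xQ, hxQ, hxe⟩ := Submodule.mem_sup.1 hxPQ
      have hxD : x ∈ D := hLD (hNL hxN)
      have hxPD : xP ∈ D := by
        have h9 : xP = x - xQ := by rw [← hxe]; abel
        rw [h9]
        exact Submodule.sub_mem _ hxD (hQD hxQ)
      have hxPbot : xP ∈ K ⊓ P := ⟨hGK ⟨hPC hxP, hxPD⟩, hxP⟩
      rw [hKP] at hxPbot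
      have hxPz : xP = 0 := hxPbot
      have hxQx : x = xQ := by rw [← hxe, hxPz, zero_add]
      have h9 : x ∈ L ⊓ Q := ⟨hNL hxN, by rw [hxQx]; exact hxQ⟩
      rw [hLQ] at h9
      exact h9
    have hMrest : M ⊓ (N ⊔ (P ⊔ Q)) = ⊥ := by
      rw [eq_bot_iff]
      rintro x ⟨hxM, hxR⟩
      obtain ⟨xN, hxN, xPQ, hxPQ, hxe⟩ := Submodule.mem_sup.1 hxR
      obtain ⟨xP, hxP, xQ, hxQ, hxe2⟩ := Submodule.mem_sup.1 hxPQ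
      have hxC : x ∈ C := hKC (hMK hxM)
      have hsub : x - xP ∈ D := by
        have h9 : x - xP = xN + xQ := by rw [← hxe, ← hxe2]; abel
        rw [h9]
        exact Submodule.add_mem _ (hLD (hNL hxN)) (hQD hxQ)
      have hsubC : x - xP ∈ C := Submodule.sub_mem _ hxC (hPC hxP)
      have hsubG : x - xP ∈ G := ⟨hsubC, hsub⟩
      have hxPK : xP ∈ K := by
        have h9 : xP = x - (x - xP) := by abel
        rw [h9]
        exact Submodule.sub_mem _ (hMK hxM) (hGK hsubG)
      have hxPz : xP = 0 := by
        have h9 : xP ∈ K ⊓ P := ⟨hxPK, hxP⟩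
        rw [hKP] at h9; exact h9
      have hxG : x ∈ G := by
        have h9 : x - xP = x := by rw [hxPz, sub_zero]
        rw [← h9]; exact hsubG
      have h9 : x ∈ G ⊓ M := ⟨hxG, hxM⟩
      rw [hGM] at h9
      exact h9
    have hGrest : G ⊓ (M ⊔ (N ⊔ (P ⊔ Q))) = ⊥ := by
      rw [eq_bot_iff]
      rintro x ⟨hxG, hxR⟩
      obtain ⟨xM, hxM, x2, hx2, hxe⟩ := Submodule.mem_sup.1 hxR
      obtain ⟨xN, hxN, x3, hx3, hxe2⟩ := Submodule.mem_sup.1 hx2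
      obtain ⟨xP, hxP, xQ, hxQ, hxe3⟩ := Submodule.mem_sup.1 hx3
      have hMP_D : xM + xP ∈ D := by
        have h9 : xM + xP = x - xN - xQ := by rw [← hxe, ← hxe2, ← hxe3]; abel
        rw [h9]
        exact Submodule.sub_mem _ (Submodule.sub_mem _ hxG.2 (hLD (hNL hxN))) (hQD hxQ)
      have hMP_C : xM + xP ∈ C := Submodule.add_mem _ (hKC (hMK hxM)) (hPC hxP)
      have hMP_G : xM + xP ∈ G := ⟨hMP_C, hMP_D⟩
      have hxPz : xP = 0 := by
        have hxPK : xP ∈ K := by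
          have h9 : xP = xM + xP - xM := by abel
          rw [h9]; exact Submodule.sub_mem _ (hGK hMP_G) (hMK hxM)
        have h9 : xP ∈ K ⊓ P := ⟨hxPK, hxP⟩
        rw [hKP] at h9; exact h9
      have hxMG : xM ∈ G := by
        have h9 : xM = xM + xP := by rw [hxPz, add_zero]
        rw [h9]; exact hMP_G
      have hxMz : xM = 0 := by
        have h9 : xM ∈ G ⊓ M := ⟨hxMG, hxM⟩
        rw [hGM] at h9; exact h9
      have hxNQ : x = xN + xQ := by
        rw [← hxe, ← hxe2, ← hxe3, hxMz, hxPz]; abel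
      have hxQL : xQ ∈ L := by
        have h9 : xQ = x - xN := by rw [hxNQ]; abel
        rw [h9]; exact Submodule.sub_mem _ (hGL hxG) (hNL hxN)
      have hxQz : xQ = 0 := by
        have h9 : xQ ∈ L ⊓ Q := ⟨hxQL, hxQ⟩
        rw [hLQ] at h9; exact h9
      have h9 : x ∈ G ⊓ N := ⟨hxG, by rw [hxNQ, hxQz, add_zero]; exact hxN⟩
      rw [hGN] at h9
      exact h9
    apply LinearIndependent.sum_type (li_coe_basis gb)
    · apply LinearIndependent.sum_type (li_coe_basis mb)
      · apply LinearIndependent.sum_type (li_coe_basis nb)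
        · exact LinearIndependent.sum_type (li_coe_basis pb) hqind
            (by rw [hspanp, hspanq]; exact disjoint_iff.2 hPQ)
        · rw [hspann, hspanpq]; exact disjoint_iff.2 hNPQ
      · rw [hspanm, hspannpq]; exact disjoint_iff.2 hMrest
    · rw [span_range_coe_basis gb, hspanmnpq]; exact disjoint_iff.2 hGrest
  · -- span = C
    rw [Submodule.span_union, Submodule.span_union,
      span_range_coe_basis gb, span_range_coe_basis mb, span_range_coe_basis pb,
      hGMK, hKPC]
  · -- span = D
    rw [Submodule.span_union, Submodule.span_union,
      span_range_coe_basis gb, span_range_coe_basis nb, ← hQ,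
      hGNL, hLQD]
  · -- the Gram matrix conditions
    have hgG : ∀ i, eg i ∈ G := fun i => (gb i).2
    have hmM : ∀ i, em i ∈ M := fun i => (mb i).2
    have hnN : ∀ i, en i ∈ N := fun i => (nb i).2
    have hpP : ∀ i, ep i ∈ P := fun i => (pb i).2
    have hgC : ∀ i, eg i ∈ C := fun i => (hgG i).1
    have hgD : ∀ i, eg i ∈ D := fun i => (hgG i).2
    have hmC : ∀ i, em i ∈ C := fun i => hKC (hMK (hmM i))
    have hmOD : ∀ i, em i ∈ oOrtho ω D := fun i => hKB (hMK (hmM i))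
    have hnD : ∀ i, en i ∈ D := fun i => hLD (hNL (hnN i))
    have hnOC : ∀ i, en i ∈ oOrtho ω C := fun i => hLA (hNL (hnN i))
    have hpC : ∀ i, ep i ∈ C := fun i => hPC (hpP i)
    have hqD' : ∀ i, eqq i ∈ D := hqmem
    intro i j
    rcases i with i | i | i | i | i <;> rcases j with j | j | j | j | j <;>
      simp only [Sum.elim_inl, Sum.elim_inr]
    · exact (hCiso _ (hgC i) _ (hgC j)).trans rfl
    · exact (hCiso _ (hgC i) _ (hmC j)).trans rfl
    · exact (hDiso _ (hgD i) _ (hnD j)).trans rfl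
    · exact (hCiso _ (hgC i) _ (hpC j)).trans rfl
    · exact (hDiso _ (hgD i) _ (hqD' j)).trans rfl
    · exact (hCiso _ (hmC i) _ (hgC j)).trans rfl
    · exact (hCiso _ (hmC i) _ (hmC j)).trans rfl
    · exact (hmOD i (en j) (hnD j)).trans rfl
    · exact (hCiso _ (hmC i) _ (hpC j)).trans rfl
    · exact (hmOD i (eqq j) (hqD' j)).trans rfl
    · exact (hDiso _ (hnD i) _ (hgD j)).trans rfl
    · exact (alt_swap_zero halt (hmOD j (en i) (hnD i))).trans rfl
    · exact (hDiso _ (hnD i) _ (hnD j)).trans rfl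
    · exact (hnOC i (ep j) (hpC j)).trans rfl
    · exact (hDiso _ (hnD i) _ (hqD' j)).trans rfl
    · exact (hCiso _ (hpC i) _ (hgC j)).trans rfl
    · exact (hCiso _ (hpC i) _ (hmC j)).trans rfl
    · exact (alt_swap_zero halt (hnOC j (ep i) (hpC i))).trans rfl
    · exact (hCiso _ (hpC i) _ (hpC j)).trans rfl
    · -- p q: value 1
      refine Eq.trans (hpq j i) ?_
      by_cases h : (i : ℕ) = (j : ℕ)
      · have h9 : j = i := Fin.ext h.symm
        rw [if_pos h9]
        exact (if_pos h).symm.trans rfl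
      · have h9 : ¬ j = i := fun hh => h (congrArg Fin.val hh).symm
        rw [if_neg h9]
        exact (if_neg h).symm.trans rfl
    · exact (hDiso _ (hqD' i) _ (hgD j)).trans rfl
    · exact (alt_swap_zero halt (hmOD j (eqq i) (hqD' i))).trans rfl
    · exact (hDiso _ (hqD' i) _ (hnD j)).trans rfl
    · -- q p: value -1
      have h5 := halt.neg (↑(pb j)) (eqq i)
      rw [hpq i j] at h5
      refine Eq.trans h5.symm ?_
      by_cases h : (i : ℕ) = (j : ℕ)
      · have h9 : i = j := Fin.ext h
        rw [if_pos h9]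
        exact Eq.trans (by norm_num) (if_pos h).symm |>.trans rfl
      · have h9 : ¬ i = j := fun hh => h (congrArg Fin.val hh)
        rw [if_neg h9]
        exact Eq.trans (by norm_num) (if_neg h).symm |>.trans rfl
    · exact (hDiso _ (hqD' i) _ (hqD' j)).trans rfl

end Adapted
lemma gram_cast {k1 k1' a b r : ℕ} (h : k1 = k1')
    (i j : Fin k1 ⊕ (Fin a ⊕ (Fin b ⊕ (Fin r ⊕ Fin r)))) :
    gram k1' a b r (Sum.map (finCongr h) id i) (Sum.map (finCongr h) id j) =
      gram k1 a b r i j := by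
  subst h
  rcases i with i | i | i | i | i <;> rcases j with j | j | j | j | j <;> rfl

/-- Transport along linearly independent families with the same Gram matrix. -/
lemma transport {V W : Type*} [AddCommGroup V] [Module ℝ V] [FiniteDimensional ℝ V]
    [AddCommGroup W] [Module ℝ W] [FiniteDimensional ℝ W]
    (ω : V →ₗ[ℝ] V →ₗ[ℝ] ℝ) (hωalt : ω.IsAlt) (hωnd : LinearMap.BilinForm.Nondegenerate ω)
    (ω' : W →ₗ[ℝ] W →ₗ[ℝ] ℝ) (hω'alt : ω'.IsAlt) (hω'nd : LinearMap.BilinForm.Nondegenerate ω')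
    (hdim : finrank ℝ V = finrank ℝ W) {ι : Type*} [Fintype ι] (g : ι → ι → ℝ)
    (e : ι → V) (e' : ι → W) (hli : LinearIndependent ℝ e) (hli' : LinearIndependent ℝ e')
    (hgram : ∀ i j, ω (e i) (e j) = g i j) (hgram' : ∀ i j, ω' (e' i) (e' j) = g i j) :
    ∃ S : V ≃ₗ[ℝ] W, (∀ v u : V, ω' (S v) (S u) = ω v u) ∧ ∀ i, S (e i) = e' i := by
  classical
  set U : Submodule ℝ V := Submodule.span ℝ (Set.range e) with hU
  set U' : Submodule ℝ W := Submodule.span ℝ (Set.range e') with hU'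
  set bU : Basis ι ℝ ↥U := Basis.span hli with hbU
  set bU' : Basis ι ℝ ↥U' := Basis.span hli' with hbU'
  set eEquiv : ↥U ≃ₗ[ℝ] ↥U' := bU.equiv bU' (Equiv.refl ι) with heEquiv
  set φ : ↥U →ₗ[ℝ] W := U'.subtype.comp eEquiv.toLinearMap with hφ
  have hφinj : Function.Injective φ := by
    rw [hφ, LinearMap.coe_comp]
    exact U'.injective_subtype.comp eEquiv.injective
  have hbUe : ∀ i : ι, (bU i : V) = e i := fun i => congrArg Subtype.val (Module.Basis.span_apply hli i)
  have hbUe' : ∀ i : ι, (bU' i : W) = e' i := fun i => congrArg Subtype.val (Module.Basis.span_apply hli' i)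
  have hφb : ∀ i : ι, φ (bU i) = e' i := by
    intro i
    rw [hφ]
    simp only [LinearMap.coe_comp, Function.comp_apply, LinearEquiv.coe_coe]
    rw [heEquiv, Basis.equiv_apply]
    exact hbUe' i
  have hφiso : ∀ x y : ↥U, ω' (φ x) (φ y) = ω ↑x ↑y := by
    have hBeq : ω'.compl₁₂ φ φ = ω.compl₁₂ U.subtype U.subtype := by
      apply LinearMap.ext_basis bU bU
      intro i j
      simp only [LinearMap.compl₁₂_apply, Submodule.coe_subtype]
      rw [hφb i, hφb j, hbUe i, hbUe j, hgram' i j]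
      exact (hgram i j).symm
    intro x y
    have h9 := LinearMap.congr_fun (LinearMap.congr_fun hBeq x) y
    simpa only [LinearMap.compl₁₂_apply, Submodule.coe_subtype] using h9
  have hk : finrank ℝ V = finrank ℝ ↥U + (finrank ℝ V - finrank ℝ ↥U) := by
    have := Submodule.finrank_le U
    omega
  obtain ⟨S, hSiso, hSext⟩ := witt_extension ω hωalt hωnd ω' hω'alt hω'nd hdim
    (finrank ℝ V - finrank ℝ ↥U) U φ hk hφinj hφiso
  refine ⟨S, hSiso, ?_⟩
  intro i
  have hmem : e i ∈ U := Submodule.subset_span ⟨i, rfl⟩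
  have h9 : S (e i) = φ ⟨e i, hmem⟩ := hSext ⟨e i, hmem⟩
  have h10 : (⟨e i, hmem⟩ : ↥U) = bU i := Subtype.ext (hbUe i).symm
  rw [h9, h10, hφb i]

/-- two coisotropic pairs `(A,B)` in `(V,ω)` and `(Â,B̂)` in `(V̂,ω̂)` are
related by a linear symplectomorphism `S` with `S(A) = Â`, `S(B) = B̂` iff their
canonical invariants coincide. -/
theorem stmt16
    {V W : Type*} [AddCommGroup V] [Module ℝ V] [FiniteDimensional ℝ V]
    [AddCommGroup W] [Module ℝ W] [FiniteDimensional ℝ W]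
    (ω : V →ₗ[ℝ] V →ₗ[ℝ] ℝ) (hωalt : ω.IsAlt) (hωnd : ω.Nondegenerate)
    (ω' : W →ₗ[ℝ] W →ₗ[ℝ] ℝ) (hω'alt : ω'.IsAlt) (hω'nd : ω'.Nondegenerate)
    (A B : Submodule ℝ V) (hA : oOrtho ω A ≤ A) (hB : oOrtho ω B ≤ B)
    (A' B' : Submodule ℝ W) (hA' : oOrtho ω' A' ≤ A') (hB' : oOrtho ω' B' ≤ B') :
    (∃ S : V ≃ₗ[ℝ] W, (∀ v u : V, ω' (S v) (S u) = ω v u) ∧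
        Submodule.map (S : V →ₗ[ℝ] W) A = A' ∧ Submodule.map (S : V →ₗ[ℝ] W) B = B') ↔
      (Module.finrank ℝ (oOrtho ω A ⊓ oOrtho ω B : Submodule ℝ V) =
          Module.finrank ℝ (oOrtho ω' A' ⊓ oOrtho ω' B' : Submodule ℝ W) ∧
        Module.finrank ℝ (oOrtho ω A) = Module.finrank ℝ (oOrtho ω' A') ∧
        Module.finrank ℝ (oOrtho ω B) = Module.finrank ℝ (oOrtho ω' B') ∧
        Module.finrank ℝ V = Module.finrank ℝ W ∧
        Module.finrank ℝ (oOrtho ω A ⊓ B : Submodule ℝ V) =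
          Module.finrank ℝ (oOrtho ω' A' ⊓ B' : Submodule ℝ W)) := by
  classical
  constructor
  · rintro ⟨S, hSiso, hSA, hSB⟩
    have hmap1 : Submodule.map (S : V →ₗ[ℝ] W) (oOrtho ω A) = oOrtho ω' A' := by
      rw [map_oOrtho S hSiso, hSA]
    have hmap2 : Submodule.map (S : V →ₗ[ℝ] W) (oOrtho ω B) = oOrtho ω' B' := by
      rw [map_oOrtho S hSiso, hSB]
    have hfr : ∀ X : Submodule ℝ V,
        finrank ℝ ↥(Submodule.map (S : V →ₗ[ℝ] W) X) = finrank ℝ ↥X := fun X =>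
      LinearEquiv.finrank_map_eq S X
    have hinf : ∀ X Y : Submodule ℝ V, Submodule.map (S : V →ₗ[ℝ] W) (X ⊓ Y) =
        Submodule.map (S : V →ₗ[ℝ] W) X ⊓ Submodule.map (S : V →ₗ[ℝ] W) Y := by
      intro X Y
      exact Submodule.map_inf _ S.injective
    refine ⟨?_, ?_, ?_, S.finrank_eq, ?_⟩
    · rw [← hmap1, ← hmap2, ← hinf, hfr]
    · rw [← hmap1, hfr]
    · rw [← hmap2, hfr]
    · rw [← hmap1, ← hSB, ← hinf, hfr]
  · rintro ⟨h1, h2, h3, h4, h5⟩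
    obtain ⟨a, b, r, eg, em, en, ep, eqq, ha, hrr, hb, hli, hspC, hspD, hgram⟩ :=
      adapted ω hωalt hωnd A B hA hB
    obtain ⟨a', b', r', eg', em', en', ep', eqq', ha', hrr', hb', hli', hspC', hspD', hgram'⟩ :=
      adapted ω' hω'alt hω'nd A' B' hA' hB'
    have haa : a = a' := by omega
    subst haa
    have hbb : b = b' := by omega
    subst hbb
    have hcc : r = r' := by omega
    subst hcc
    obtain ⟨S, hSiso, hSe⟩ := transport ω hωalt hωnd ω' hω'alt hω'nd h4
      (gram (finrank ℝ ↥(oOrtho ω A ⊓ oOrtho ω B)) a b r)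
      (Sum.elim eg (Sum.elim em (Sum.elim en (Sum.elim ep eqq))))
      ((Sum.elim eg' (Sum.elim em' (Sum.elim en' (Sum.elim ep' eqq')))) ∘
        Sum.map (finCongr h1) id)
      hli
      (hli'.comp (Sum.map (finCongr h1) id)
        (Function.Injective.sumMap (finCongr h1).injective Function.injective_id))
      hgram
      (fun i j => (hgram' _ _).trans (gram_cast h1 i j))
    have hSg : ∀ i, S (eg i) = eg' (finCongr h1 i) := fun i => hSe (Sum.inl i)
    have hSm : ∀ i, S (em i) = em' i := fun i => hSe (Sum.inr (Sum.inl i))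
    have hSn : ∀ i, S (en i) = en' i := fun i => hSe (Sum.inr (Sum.inr (Sum.inl i)))
    have hSp : ∀ i, S (ep i) = ep' i := fun i => hSe (Sum.inr (Sum.inr (Sum.inr (Sum.inl i))))
    have hSq : ∀ i, S (eqq i) = eqq' i := fun i => hSe (Sum.inr (Sum.inr (Sum.inr (Sum.inr i))))
    have himg : ∀ {n m : ℕ} (f : Fin n → V) (f' : Fin m → W) (c : Fin n → Fin m),
        Function.Surjective c → (∀ i, S (f i) = f' (c i)) →
        ⇑(S : V →ₗ[ℝ] W) '' Set.range f = Set.range f' := by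
      intro n m f f' c hc hf
      rw [← Set.range_comp]
      have h9 : ⇑(S : V →ₗ[ℝ] W) ∘ f = f' ∘ c := by
        funext i
        simpa using hf i
      rw [h9, Set.range_comp, hc.range_eq, Set.image_univ]
    have hmapC : Submodule.map (S : V →ₗ[ℝ] W) (oOrtho ω A) = oOrtho ω' A' := by
      rw [← hspC, Submodule.map_span, Set.image_union, Set.image_union,
        himg eg eg' (finCongr h1) (finCongr h1).surjective hSg,
        himg em em' id Function.surjective_id hSm,
        himg ep ep' id Function.surjective_id hSp, hspC']
    have hmapD : Submodule.map (S : V →ₗ[ℝ] W) (oOrtho ω B) = oOrtho ω' B' := by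
      rw [← hspD, Submodule.map_span, Set.image_union, Set.image_union,
        himg eg eg' (finCongr h1) (finCongr h1).surjective hSg,
        himg en en' id Function.surjective_id hSn,
        himg eqq eqq' id Function.surjective_id hSq, hspD']
    refine ⟨S, hSiso, ?_, ?_⟩
    · have hA2 : A = oOrtho ω (oOrtho ω A) := (oOrtho_oOrtho hωalt hωnd A).symm
      rw [hA2, map_oOrtho S hSiso, hmapC, oOrtho_oOrtho hω'alt hω'nd A']
    · have hB2 : B = oOrtho ω (oOrtho ω B) := (oOrtho_oOrtho hωalt hωnd B).symm
      rw [hB2, map_oOrtho S hSiso, hmapD, oOrtho_oOrtho hω'alt hω'nd B']
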